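/- Suppose q = 1 (so that, by the standing assumption, K has characteristic 0, and D_1 is the operator with (D_1 a)(n) = (n+1)·a(n+1)). Let α ∈ K be nonzero, let s ≥ 1, and fix a Jordan chain (Ψ_{α,r})_{r≥1} at α. Then D_1 Ψ_{α,s} + s·Ψ_{α,s+1} lies in the K-linear span of {Ψ_{α,r} : 1 ≤ r ≤ s}. -/

import Mathlib

open Polynomial
open scoped Classical

noncomputable section

/-- The q-integer {n}_q. -/
def qInt (K : Type*) [Field K] (q : K) (n : ℤ) : K :=
  if q = 1 then (n : K) else (q ^ n - 1) / (q - 1)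

/-- The multiplication operator `M` on formal Laurent series `L = ℤ → K`:
`(M a)(n) = a(n-1)`. -/
def Mop (K : Type*) [Field K] : Module.End K (ℤ → K) where
  toFun a := fun n => a (n - 1)
  map_add' _ _ := rfl
  map_smul' _ _ := rfl

/-- The q-difference operator `D_q` on `L = ℤ → K`: `(D_q a)(n) = {n+1}_q · a(n+1)`. -/
def Dq (K : Type*) [Field K] (q : K) : Module.End K (ℤ → K) where
  toFun a := fun n => qInt K q (n + 1) * a (n + 1)
  map_add' x y := by funext n; simp [Pi.add_apply, mul_add]
  map_smul' c x := by funext n; simp [Pi.smul_apply, smul_eq_mul]; ring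

/-- The element `Ψ_{α,1} ∈ L`, `Ψ_{α,1}(n) = α^{-n}`. -/
def Psi1 (K : Type*) [Field K] (α : K) : ℤ → K := fun n => α ^ (-n)

/-- A Jordan chain at `α`: a sequence `(Ψ_{α,s})_{s ≥ 1}` with first term `Ψ_{α,1}`
and `(M - α·id) Ψ_{α,s} = Ψ_{α,s-1}` for `s ≥ 2`. -/
def IsJordanChain (K : Type*) [Field K] (α : K) (Ψ : ℕ → ℤ → K) : Prop :=
  Ψ 1 = Psi1 K α ∧ ∀ s : ℕ, 2 ≤ s → Mop K (Ψ s) - α • Ψ s = Ψ (s - 1)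

/-- The operator `M - α·id`. -/
def MabM (K : Type*) [Field K] (α : K) : Module.End K (ℤ → K) :=
  Mop K - α • LinearMap.id

lemma Top_apply {K : Type*} [Field K] (α : K) (a : ℤ → K) (n : ℤ) :
    MabM K α a n = a (n - 1) - α * a n := by
  simp [MabM, Mop, LinearMap.sub_apply]

lemma qInt_one {K : Type*} [Field K] (n : ℤ) : qInt K 1 n = (n : K) := by
  simp [qInt]

lemma Dq_one_apply {K : Type*} [Field K] (a : ℤ → K) (n : ℤ) :
    Dq K 1 a n = ((n : K) + 1) * a (n + 1) := by
  show qInt K 1 (n + 1) * a (n + 1) = _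
  rw [qInt_one]; push_cast; ring

lemma Top_Psi1 {K : Type*} [Field K] (α : K) (hα : α ≠ 0) :
    MabM K α (Psi1 K α) = 0 := by
  funext n
  rw [Top_apply]
  simp only [Psi1, Pi.zero_apply]
  rw [show -(n - 1) = -n + 1 by ring, zpow_add₀ hα, zpow_one]
  ring

lemma ker_Top {K : Type*} [Field K] (α : K) (hα : α ≠ 0) (a : ℤ → K)
    (h : MabM K α a = 0) : a = a 0 • Psi1 K α := by
  have h' : ∀ n : ℤ, a (n - 1) = α * a n := by
    intro n
    have := congrFun h n
    rw [Top_apply] at this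
    simpa [sub_eq_zero] using this
  funext n
  simp only [Psi1, Pi.smul_apply, smul_eq_mul]
  induction n using Int.induction_on with
  | zero => simp
  | succ k ih =>
    have hk := h' ((k : ℤ) + 1)
    simp only [add_sub_cancel_right] at hk
    have : a ((k : ℤ) + 1) = α⁻¹ * a k := by
      field_simp
      linear_combination -hk
    rw [this, ih, show (-((k : ℤ) + 1)) = -(k : ℤ) + (-1) by ring,
      zpow_add₀ hα, zpow_neg_one]
    ring
  | pred k ih =>
    have hk := h' (-(k : ℤ))
    rw [show -(k : ℤ) - 1 = -(k : ℤ) - 1 by ring] at hk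
    rw [show (-(k : ℤ) - 1) = -((k : ℤ)) - 1 by ring, hk, ih,
      show (-(-(k : ℤ) - 1)) = -(-(k : ℤ)) + 1 by ring, zpow_add₀ hα, zpow_one]
    ring

lemma Top_Dq {K : Type*} [Field K] (α : K) (a : ℤ → K) :
    MabM K α (Dq K 1 a) = Dq K 1 (MabM K α a) - a := by
  funext n
  simp only [Pi.sub_apply]
  rw [Top_apply, Dq_one_apply, Dq_one_apply, Dq_one_apply, Top_apply,
    show n - 1 + 1 = n by ring, show n + 1 - 1 = n by ring]
  push_cast
  ring

/-- for `q = 1`, `D_1 Ψ_{α,s} + s·Ψ_{α,s+1}` lies in the span of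
`{Ψ_{α,r} : 1 ≤ r ≤ s}`. -/
theorem D1_Psi_s (K : Type*) [Field K]
    (hqi : ∀ n : ℤ, n ≠ 0 → qInt K (1 : K) n ≠ 0)
    (α : K) (hα : α ≠ 0) (s : ℕ) (hs : 1 ≤ s)
    (Ψ : ℕ → ℤ → K) (hΨ : IsJordanChain K α Ψ) :
    Dq K 1 (Ψ s) + (s : K) • Ψ (s + 1) ∈
      Submodule.span K (Ψ '' {r : ℕ | 1 ≤ r ∧ r ≤ s}) := by
  obtain ⟨h1, hchain⟩ := hΨ
  have hTop : ∀ s : ℕ, 2 ≤ s → MabM K α (Ψ s) = Ψ (s - 1) := by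
    intro s hs
    have := hchain s hs
    simpa [MabM, LinearMap.sub_apply] using this
  induction s, hs using Nat.le_induction with
  | base =>
    have e2 := hTop 2 (le_refl 2)
    norm_num at e2
    have hker : MabM K α (Dq K 1 (Ψ 1) + ((1 : ℕ) : K) • Ψ (1 + 1)) = 0 := by
      rw [map_add, Top_Dq, map_smul, show (1 : ℕ) + 1 = 2 from rfl, e2,
        h1, Top_Psi1 α hα, map_zero]
      simp
    have hc := ker_Top α hα _ hker
    rw [← h1] at hc
    rw [hc]
    exact Submodule.smul_mem _ _
      (Submodule.subset_span ⟨1, ⟨le_refl 1, le_refl 1⟩, rfl⟩)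
  | succ n hn IH =>
    have hsub : Submodule.span K (Ψ '' {r : ℕ | 1 ≤ r ∧ r ≤ n}) ≤
        Submodule.map (MabM K α)
          (Submodule.span K (Ψ '' {r : ℕ | 1 ≤ r ∧ r ≤ n + 1})) := by
      rw [Submodule.map_span]
      apply Submodule.span_le.mpr
      rintro x ⟨r, ⟨hr1, hr2⟩, rfl⟩
      apply Submodule.subset_span
      refine ⟨Ψ (r + 1), ⟨r + 1, ⟨by omega, by omega⟩, rfl⟩, ?_⟩
      have := hTop (r + 1) (by omega)
      simpa using this
    obtain ⟨g, hg, hgT⟩ := hsub IH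
    have e1 := hTop (n + 1) (by omega)
    have e2 := hTop (n + 1 + 1) (by omega)
    simp only [Nat.add_sub_cancel] at e1 e2
    have hT1 : MabM K α (Dq K 1 (Ψ (n + 1)) + ((n + 1 : ℕ) : K) • Ψ (n + 1 + 1))
        = Dq K 1 (Ψ n) + (n : K) • Ψ (n + 1) := by
      rw [map_add, Top_Dq, map_smul, e1, e2]
      push_cast
      module
    have hker : MabM K α
        (Dq K 1 (Ψ (n + 1)) + ((n + 1 : ℕ) : K) • Ψ (n + 1 + 1) - g) = 0 := by
      rw [map_sub, hT1, hgT, sub_self]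
    have hc := ker_Top α hα _ hker
    rw [← h1] at hc
    have hdecomp : Dq K 1 (Ψ (n + 1)) + ((n + 1 : ℕ) : K) • Ψ (n + 1 + 1)
        = ((Dq K 1 (Ψ (n + 1)) + ((n + 1 : ℕ) : K) • Ψ (n + 1 + 1) - g) 0) • Ψ 1
          + g := by
      rw [← hc, sub_add_cancel]
    rw [hdecomp]
    exact Submodule.add_mem _
      (Submodule.smul_mem _ _
        (Submodule.subset_span ⟨1, ⟨le_refl 1, by omega⟩, rfl⟩)) hg
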